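/- Let A = {x₁,…,xₙ} be a set of n distinct positive real numbers, and let S = {(xᵢ,0), (−xᵢ,0), (0,xᵢ), (0,−xᵢ) : 1 ≤ i ≤ n}. For each i, the point (xᵢ,0) is adjacent to (0,xᵢ) in the Delaunay triangulation of S ∪ {(0,0)}: the circle with center (xᵢ,xᵢ) and radius xᵢ passes through (xᵢ,0) and (0,xᵢ) and contains no other point of S ∪ {(0,0)} in its closed disk except these two. -/

import Mathlib

open Metric Set

noncomputable section

abbrev Pt : Type := EuclideanSpace ℝ (Fin 2)

def pt (a b : ℝ) : Pt := WithLp.toLp 2 ![a, b]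

/-- General position: no 3 collinear, no 4 cocircular. -/
def GenPos (S : Set Pt) : Prop :=
  (∀ T ⊆ S, T.ncard = 3 → ¬ Collinear ℝ T) ∧
  (∀ T ⊆ S, T.ncard = 4 → ¬ ∃ (c : Pt) (r : ℝ), ∀ p ∈ T, dist p c = r)

/-- An empty circle through `p` and `q` witnessing Delaunay adjacency. -/
def EmptyCircle (S : Set Pt) (p q : Pt) : Prop :=
  ∃ (c : Pt) (r : ℝ), dist p c = r ∧ dist q c = r ∧
    ∀ s ∈ S, s ≠ p → s ≠ q → r < dist s c

/-- The Delaunay triangulation of `S` viewed as a graph on the plane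
(vertices outside `S` are isolated). -/
def DelaunayGraph (S : Set Pt) : SimpleGraph Pt where
  Adj p q := p ≠ q ∧ p ∈ S ∧ q ∈ S ∧ EmptyCircle S p q
  symm := by
    constructor
    rintro p q ⟨hne, hp, hq, c, r, h1, h2, h3⟩
    exact ⟨hne.symm, hq, hp, c, r, h2, h1, fun s hs h1' h2' => h3 s hs h2' h1'⟩
  loopless := ⟨fun p h => h.1 rfl⟩

/-- `p` is a vertex of the convex hull of `S`. -/
def HullVertex (S : Set Pt) (p : Pt) : Prop :=
  p ∈ S ∧ p ∉ convexHull ℝ (S \ {p})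

/-- Delaunay depth of a point of `S`: one plus the graph distance in the
Delaunay triangulation to the set of convex-hull vertices. -/
def delaunayDepth (S : Set Pt) (p : Pt) : ℕ :=
  1 + sInf {d : ℕ | ∃ h : Pt, HullVertex S h ∧ (DelaunayGraph S).dist p h = d}

/-- Delaunay depth of a query point `p` relative to `S`: its depth in `S ∪ {p}`. -/
def relDepth (S : Set Pt) (p : Pt) : ℕ := delaunayDepth (insert p S) p

/-- The segment corresponding to an (unordered) edge. -/
def edgeSeg (e : Sym2 Pt) : Set Pt :=
  Sym2.lift ⟨fun a b => segment ℝ a b, fun a b => segment_symm ℝ a b⟩ e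

/-- The closed polygonal curve drawn by a closed walk of the graph. -/
def walkCurve {G : SimpleGraph Pt} {p : Pt} (w : G.Walk p p) : Set Pt :=
  ⋃ e ∈ w.edges, edgeSeg e

/-- `x` lies in the bounded open region enclosed by the curve. -/
def InsideCurve (curve : Set Pt) (x : Pt) : Prop :=
  x ∉ curve ∧ Bornology.IsBounded (connectedComponentIn curveᶜ x)

/-- The element-uniqueness gadget: the four points `(±xᵢ,0), (0,±xᵢ)` for each `i`. -/
def gadget (n : ℕ) (x : Fin n → ℝ) : Set Pt :=
  ⋃ i : Fin n, {pt (x i) 0, pt (-(x i)) 0, pt 0 (x i), pt 0 (-(x i))}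

lemma dist_pt (a b c d : ℝ) :
    dist (pt a b) (pt c d) = Real.sqrt ((a - c) ^ 2 + (b - d) ^ 2) := by
  rw [EuclideanSpace.dist_eq]
  congr 1
  simp [pt, Fin.sum_univ_two, Real.dist_eq, sq_abs]

lemma pt_inj {a b c d : ℝ} (h : pt a b = pt c d) : a = c ∧ b = d := by
  constructor
  · exact congrArg (fun v : Pt => v 0) h
  · exact congrArg (fun v : Pt => v 1) h

/-- The circle of center `(xᵢ, xᵢ)` and radius `xᵢ` passes through `(xᵢ,0)` and
`(0,xᵢ)` and its closed disk contains no other point of `S ∪ {(0,0)}`,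
witnessing the Delaunay adjacency of `(xᵢ,0)` and `(0,xᵢ)`. -/
theorem stmt6 (n : ℕ) (x : Fin n → ℝ) (hpos : ∀ i, 0 < x i)
    (hinj : Function.Injective x) (i : Fin n) :
    dist (pt (x i) 0) (pt (x i) (x i)) = x i ∧
    dist (pt 0 (x i)) (pt (x i) (x i)) = x i ∧
    ∀ s ∈ insert (pt 0 0) (gadget n x), s ≠ pt (x i) 0 → s ≠ pt 0 (x i) →
      x i < dist s (pt (x i) (x i)) := by
  have hx := hpos i
  have key : ∀ a b : ℝ, (x i) ^ 2 < (a - x i) ^ 2 + (b - x i) ^ 2 →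
      x i < dist (pt a b) (pt (x i) (x i)) := by
    intro a b h
    rw [dist_pt]
    exact (Real.lt_sqrt hx.le).2 h
  refine ⟨?_, ?_, ?_⟩
  · rw [dist_pt]
    rw [show (x i - x i) ^ 2 + (0 - x i) ^ 2 = (x i) ^ 2 by ring]
    exact Real.sqrt_sq hx.le
  · rw [dist_pt]
    rw [show (0 - x i) ^ 2 + (x i - x i) ^ 2 = (x i) ^ 2 by ring]
    exact Real.sqrt_sq hx.le
  · intro s hs h1 h2
    rcases hs with hs | hs
    · subst hs
      apply key
      nlinarith
    · simp only [gadget, Set.mem_iUnion, Set.mem_insert_iff, Set.mem_singleton_iff] at hs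
      obtain ⟨j, hj⟩ := hs
      have hxj := hpos j
      rcases hj with hj | hj | hj | hj <;> subst hj <;> apply key
      · have : x j ≠ x i := fun h => h1 (by rw [h])
        have : (x j - x i) ^ 2 > 0 := pow_two_pos_of_ne_zero (sub_ne_zero.2 this)
        nlinarith
      · nlinarith
      · have : x j ≠ x i := fun h => h2 (by rw [h])
        have : (x j - x i) ^ 2 > 0 := pow_two_pos_of_ne_zero (sub_ne_zero.2 this)
        nlinarith
      · nlinarith
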